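/- Decay of the optimality gap for the GCG iteration with predefined step sizes, higher-dimensional case (Proposition 4.2, d ≥ 2). Let C > 0, let k₁, k₂ be real numbers with 1 ≤ k₂ ≤ k₁, set δ_k = k₂/(k+k₁), let ρ ∈ (0,1), and let s be a real number with 0 < s < k₂ and sρ ≤ 1. Let (ε_k)_{k≥0} be a sequence of nonnegative real numbers satisfying ε_{k+1} ≤ (1 − δ_k)ε_k + Cδ_k²·ε_k^{1−ρ} for all k. Set N = max{ ε₀·k₁^{s}, (C·k₂²/(k₂−s))^{1/ρ} }. Then for every k ≥ 0, ε_k ≤ N/(k+k₁)^{s}. -/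
import Mathlib

lemma bern_neg {s x : ℝ} (hs : 0 ≤ s) (hx : 0 ≤ x) : 1 - s * x ≤ (1 + x) ^ (-s) := by
  have h1 : (0:ℝ) < 1 + x := by linarith
  have hlog : Real.log (1 + x) ≤ x := by
    have := Real.log_le_sub_one_of_pos h1; linarith
  have hlog0 : 0 ≤ Real.log (1 + x) := Real.log_nonneg (by linarith)
  rw [Real.rpow_def_of_pos h1, mul_comm (Real.log (1 + x)) (-s)]
  have h3 := Real.add_one_le_exp (-s * Real.log (1 + x))
  nlinarith [mul_nonneg hs (sub_nonneg.2 hlog)]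

/-- Decay of the optimality gap for the GCG iteration with predefined step sizes
`δ_k = k₂/(k+k₁)`, higher-dimensional case (Proposition 4.2, `d ≥ 2`):
if `ε_{k+1} ≤ (1−δ_k)ε_k + Cδ_k²·ε_k^{1−ρ}`, then `ε_k ≤ N/(k+k₁)^s` with
`N = max{ε₀·k₁^s, (C·k₂²/(k₂−s))^{1/ρ}}`. -/
theorem optimality_gap_decay_higher_dim
    (C : ℝ) (hC : 0 < C)
    (k₁ k₂ : ℝ) (h1 : 1 ≤ k₂) (h2 : k₂ ≤ k₁)
    (ρ : ℝ) (hρ : ρ ∈ Set.Ioo (0:ℝ) 1)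
    (s : ℝ) (hs0 : 0 < s) (hsk : s < k₂) (hsρ : s * ρ ≤ 1)
    (ε : ℕ → ℝ) (hε : ∀ k, 0 ≤ ε k)
    (hrec : ∀ k : ℕ,
      ε (k + 1) ≤ (1 - k₂ / (k + k₁)) * ε k + C * (k₂ / (k + k₁)) ^ 2 * ε k ^ (1 - ρ)) :
    ∀ k : ℕ,
      ε k ≤ max (ε 0 * k₁ ^ s) ((C * k₂ ^ 2 / (k₂ - s)) ^ (1 / ρ)) / (k + k₁) ^ s := by
  obtain ⟨hρ0, hρ1⟩ := hρ
  set N := max (ε 0 * k₁ ^ s) ((C * k₂ ^ 2 / (k₂ - s)) ^ (1 / ρ)) with hNdef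
  have hk₁ : (1:ℝ) ≤ k₁ := le_trans h1 h2
  have hks : 0 < k₂ - s := by linarith
  have hB : 0 < C * k₂ ^ 2 / (k₂ - s) := by positivity
  have hNpos : 0 < N :=
    lt_of_lt_of_le (Real.rpow_pos_of_pos hB _) (le_max_right _ _)
  -- key bound on N
  have hNρ : C * k₂ ^ 2 * N ^ (1 - ρ) ≤ (k₂ - s) * N := by
    have h5 : C * k₂ ^ 2 / (k₂ - s) ≤ N ^ ρ := by
      have h6 : ((C * k₂ ^ 2 / (k₂ - s)) ^ (1 / ρ)) ^ ρ ≤ N ^ ρ :=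
        Real.rpow_le_rpow (Real.rpow_nonneg hB.le _) (le_max_right _ _) hρ0.le
      rwa [← Real.rpow_mul hB.le, one_div_mul_cancel hρ0.ne', Real.rpow_one] at h6
    have h7 : C * k₂ ^ 2 ≤ (k₂ - s) * N ^ ρ := by
      rw [div_le_iff₀ hks] at h5; linarith [h5]
    calc C * k₂ ^ 2 * N ^ (1 - ρ) ≤ (k₂ - s) * N ^ ρ * N ^ (1 - ρ) := by
          have := Real.rpow_nonneg hNpos.le (1 - ρ)
          nlinarith
      _ = (k₂ - s) * N := by
          rw [mul_assoc, ← Real.rpow_add hNpos, add_sub_cancel, Real.rpow_one]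
  intro k
  induction k with
  | zero =>
      have hk₁s : 0 < k₁ ^ s := Real.rpow_pos_of_pos (by linarith) s
      rw [Nat.cast_zero, zero_add, le_div_iff₀ hk₁s]
      exact le_max_left _ _
  | succ k ih =>
      set t : ℝ := (k : ℝ) + k₁ with htdef
      have ht1 : (1:ℝ) ≤ t := by
        have : (0:ℝ) ≤ (k:ℝ) := Nat.cast_nonneg k
        simp only [htdef]; linarith
      have ht0 : (0:ℝ) < t := by linarith
      have htk₂ : k₂ ≤ t := by
        have : (0:ℝ) ≤ (k:ℝ) := Nat.cast_nonneg k
        simp only [htdef]; linarith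
      have hts : 0 < t ^ s := Real.rpow_pos_of_pos ht0 s
      have hcast : ((k + 1 : ℕ) : ℝ) + k₁ = t + 1 := by
        simp only [htdef]; push_cast; ring
      rw [hcast]
      -- step 1: monotonicity
      have step1 : ε (k + 1) ≤
          (1 - k₂ / t) * (N / t ^ s) + C * (k₂ / t) ^ 2 * (N / t ^ s) ^ (1 - ρ) := by
        have hrk := hrec k
        rw [← htdef] at hrk
        refine le_trans hrk ?_
        have c1 : 0 ≤ 1 - k₂ / t := by rw [sub_nonneg, div_le_one ht0]; exact htk₂
        have c2 : (0:ℝ) ≤ C * (k₂ / t) ^ 2 := by positivity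
        have e1 : ε k ^ (1 - ρ) ≤ (N / t ^ s) ^ (1 - ρ) :=
          Real.rpow_le_rpow (hε k) ih (by linarith)
        have := mul_le_mul_of_nonneg_left ih c1
        have := mul_le_mul_of_nonneg_left e1 c2
        linarith
      -- step 2: algebra
      have step2 : (1 - k₂ / t) * (N / t ^ s) + C * (k₂ / t) ^ 2 * (N / t ^ s) ^ (1 - ρ)
          ≤ N / t ^ s * (1 - s / t) := by
        have hpow : (N / t ^ s) ^ (1 - ρ) = N ^ (1 - ρ) / t ^ (s * (1 - ρ)) := by
          rw [Real.div_rpow hNpos.le hts.le, Real.rpow_mul ht0.le]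
        rw [hpow]
        have hterm2 : C * (k₂ / t) ^ 2 * (N ^ (1 - ρ) / t ^ (s * (1 - ρ)))
            ≤ (k₂ - s) * N / (t * t ^ s) := by
          have hden : t * t ^ s ≤ t ^ 2 * t ^ (s * (1 - ρ)) := by
            have e1 : t ^ 2 * t ^ (s * (1 - ρ)) = t ^ ((2:ℝ) + s * (1 - ρ)) := by
              rw [← Real.rpow_natCast t 2, ← Real.rpow_add ht0]; norm_num
            have e2 : t * t ^ s = t ^ ((1:ℝ) + s) := by
              rw [Real.rpow_add ht0, Real.rpow_one]
            rw [e1, e2]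
            apply Real.rpow_le_rpow_of_exponent_le ht1
            have e3 : s * (1 - ρ) = s - s * ρ := by ring
            rw [e3]; linarith
          have lhs_eq : C * (k₂ / t) ^ 2 * (N ^ (1 - ρ) / t ^ (s * (1 - ρ)))
              = C * k₂ ^ 2 * N ^ (1 - ρ) / (t ^ 2 * t ^ (s * (1 - ρ))) := by
            field_simp
          rw [lhs_eq, div_le_div_iff₀ (by positivity) (by positivity)]
          calc C * k₂ ^ 2 * N ^ (1 - ρ) * (t * t ^ s)
              ≤ C * k₂ ^ 2 * N ^ (1 - ρ) * (t ^ 2 * t ^ (s * (1 - ρ))) :=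
                mul_le_mul_of_nonneg_left hden (by positivity)
            _ ≤ (k₂ - s) * N * (t ^ 2 * t ^ (s * (1 - ρ))) :=
                mul_le_mul_of_nonneg_right hNρ (by positivity)
        have hfirst : (1 - k₂ / t) * (N / t ^ s) + (k₂ - s) * N / (t * t ^ s)
            = N / t ^ s * (1 - s / t) := by
          field_simp; ring
        linarith
      -- step 3: Bernoulli
      have step3 : N / t ^ s * (1 - s / t) ≤ N / (t + 1) ^ s := by
        have hx : (0:ℝ) ≤ 1 / t := by positivity
        have hbern : 1 - s * (1 / t) ≤ (1 + 1 / t) ^ (-s) := bern_neg hs0.le hx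
        have hsplit : (t + 1) ^ s = t ^ s * (1 + 1 / t) ^ s := by
          rw [← Real.mul_rpow ht0.le (by positivity)]
          congr 1; field_simp
        have hpos1 : (0:ℝ) < (1 + 1 / t) ^ s := Real.rpow_pos_of_pos (by positivity) s
        rw [hsplit]
        have hneg : (1 + 1 / t) ^ (-s) = 1 / (1 + 1 / t) ^ s := by
          rw [Real.rpow_neg (by positivity)]; exact inv_eq_one_div _
        rw [hneg] at hbern
        have : N / (t ^ s * (1 + 1 / t) ^ s) = N / t ^ s * (1 / (1 + 1 / t) ^ s) := by
          field_simp
        rw [this]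
        have hM : 0 ≤ N / t ^ s := by positivity
        have : 1 - s / t = 1 - s * (1 / t) := by ring
        rw [this]
        exact mul_le_mul_of_nonneg_left hbern hM
      linarith
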